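/- Let φ(u) = m + σ²·u + ∫₀^∞ (1 − e^{−u y}) Π̄(y) dy be a Bernstein function of class B_N with σ² > 0 and Π̄̄(0⁺) = ∫₀^∞ Π̄(y) dy < ∞, and write Π̄̄(y) = ∫_y^∞ Π̄(r) dr. (i) For every 𝔪 > (m + Π̄̄(0⁺))/σ², the function g_𝔪(y) = e^{−𝔪 y} ( 𝔪σ² − m + 𝔪 ∫₀^y e^{𝔪 r} Π̄̄(r) dr − e^{𝔪 y} Π̄̄(y) ) is nonnegative for all y > 0, and for every u > 0 one has φ(u)/(u + 𝔪) = m/𝔪 + ∫₀^∞ (1 − e^{−u y}) g_𝔪(y) dy; in particular u ↦ φ(u)/(u + 𝔪) is a Bernstein function. (ii) If u₀ > 0 satisfies ∫₀^∞ e^{u₀ y} Π̄̄(y) dy < ∞ and m = σ² u₀ + u₀ ∫₀^∞ e^{u₀ y} Π̄̄(y) dy (i.e. the analytic extension of φ vanishes at −u₀), then u₀ ≤ m/σ², with equality if and only if Π̄̄(0⁺) = 0. (Paper: Proposition 'lem:bernst_ratio', item 1.) -/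

import Mathlib

open MeasureTheory

/-- The double tail `Π̄̄(y) = ∫_y^∞ Π̄(r) dr`. -/
noncomputable def PiBar2 (Pib : ℝ → ℝ) (y : ℝ) : ℝ := ∫ r in Set.Ioi y, Pib r

/-- The candidate Lévy density of `u ↦ φ(u)/(u+𝔪)`. -/
noncomputable def gfun (Pib : ℝ → ℝ) (m σ2 M y : ℝ) : ℝ :=
  Real.exp (-(M * y)) *
    (M * σ2 - m + M * (∫ r in Set.Ioc (0:ℝ) y, Real.exp (M * r) * PiBar2 Pib r)
      - Real.exp (M * y) * PiBar2 Pib y)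

section Aux
open Set Real Filter

variable {Pib : ℝ → ℝ}

lemma aux_intOn_exp_neg_mul {b : ℝ} (hb : 0 < b) (c : ℝ) :
    IntegrableOn (fun y => Real.exp (-(b*y))) (Ioi c) := by
  simpa [neg_mul] using exp_neg_integrableOn_Ioi c hb

lemma aux_integral_exp_neg_mul_Ioi {b : ℝ} (hb : 0 < b) (c : ℝ) :
    ∫ y in Ioi c, Real.exp (-(b*y)) = Real.exp (-(b*c))/b := by
  have hderiv : ∀ x ∈ Ici c, HasDerivAt (fun y => -Real.exp (-(b*y))/b) (Real.exp (-(b*x))) x := by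
    intro x _
    have h1 : HasDerivAt (fun y : ℝ => -(b*y)) (-b) x := by
      simpa using ((hasDerivAt_id x).const_mul (-b))
    have h2 := (Real.hasDerivAt_exp (-(b*x))).comp x h1
    have h3 := (h2.const_mul (-(1/b)))
    exact (h3.congr_deriv (by field_simp [hb.ne'])).congr_of_eventuallyEq
      (Filter.Eventually.of_forall fun y => by simp only [Function.comp_apply]; ring)
  have htend : Tendsto (fun y => -Real.exp (-(b*y))/b) atTop (nhds 0) := by
    have h1 : Tendsto (fun y : ℝ => -(b*y)) atTop atBot := by
      exact tendsto_neg_atBot_iff.mpr (by simpa using (tendsto_id.const_mul_atTop hb))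
    have h2 := ((Real.tendsto_exp_atBot.comp h1).neg.div_const b)
    simpa using h2
  have := MeasureTheory.integral_Ioi_of_hasDerivAt_of_tendsto' hderiv (aux_intOn_exp_neg_mul hb c) htend
  rw [this]; ring

lemma aux_exp_prim {M a b : ℝ} (hab : a ≤ b) :
    ∫ r in Ioc a b, M * Real.exp (M*r) = Real.exp (M*b) - Real.exp (M*a) := by
  rw [← intervalIntegral.integral_of_le hab]
  have h : ∀ x ∈ uIcc a b, HasDerivAt (fun r => Real.exp (M*r)) (M * Real.exp (M*x)) x := by
    intro x _
    have h1 : HasDerivAt (fun r : ℝ => M*r) M x := by simpa using (hasDerivAt_id x).const_mul M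
    exact ((Real.hasDerivAt_exp (M*x)).comp x h1).congr_deriv (by ring)
  exact intervalIntegral.integral_eq_sub_of_hasDerivAt h
    (Continuous.intervalIntegrable (by continuity) a b)

lemma PiBar2_split (hPib_int : IntegrableOn Pib (Ioi 0)) {x y : ℝ} (hx : 0 ≤ x) (hxy : x ≤ y) :
    PiBar2 Pib x = (∫ s in Ioc x y, Pib s) + PiBar2 Pib y := by
  unfold PiBar2
  rw [← Ioc_union_Ioi_eq_Ioi hxy]
  exact setIntegral_union (Ioc_disjoint_Ioi le_rfl) measurableSet_Ioi
    (hPib_int.mono_set (fun s hs => lt_of_le_of_lt hx hs.1))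
    (hPib_int.mono_set (Ioi_subset_Ioi (hx.trans hxy)))

lemma PiBar2_nonneg (hPib_nonneg : ∀ y : ℝ, 0 < y → 0 ≤ Pib y) {y : ℝ} (hy : 0 ≤ y) :
    0 ≤ PiBar2 Pib y :=
  setIntegral_nonneg measurableSet_Ioi fun r hr => hPib_nonneg r (lt_of_le_of_lt hy hr)

lemma aux_Jint (hPib_int : IntegrableOn Pib (Ioi 0)) {u : ℝ} (hu : 0 < u) :
    IntegrableOn (fun s => Real.exp (-(u*s)) * Pib s) (Ioi 0) := by
  refine Integrable.mono' hPib_int.norm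
    ((Continuous.aestronglyMeasurable (by continuity)).mul hPib_int.aestronglyMeasurable) ?_
  filter_upwards [ae_restrict_mem measurableSet_Ioi] with s hs
  rw [norm_mul, Real.norm_eq_abs, abs_of_nonneg (Real.exp_pos _).le]
  have h1 : Real.exp (-(u*s)) ≤ 1 := Real.exp_le_one_iff.mpr (by nlinarith [Set.mem_Ioi.mp hs])
  nlinarith [norm_nonneg (Pib s), Real.exp_pos (-(u*s))]

lemma core_identity (hPib_int : IntegrableOn Pib (Ioi 0))
    {M y : ℝ} (hM : 0 < M) (hy : 0 < y) :
    M * ∫ r in Ioc (0:ℝ) y, Real.exp (M*r) * PiBar2 Pib r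
      = (∫ s in Ioc (0:ℝ) y, (Real.exp (M*s) - 1) * Pib s)
        + (Real.exp (M*y) - 1) * PiBar2 Pib y := by
  have hμfin : IsFiniteMeasure (volume.restrict (Ioc (0:ℝ) y)) := by
    constructor
    rw [Measure.restrict_apply_univ]
    simp [Real.volume_Ioc]
  set F : ℝ × ℝ → ℝ :=
    {p : ℝ × ℝ | p.1 < p.2}.indicator (fun p => M * Real.exp (M * p.1) * Pib p.2) with hF
  have hPm : AEStronglyMeasurable Pib (volume.restrict (Ioi (0:ℝ))) := hPib_int.aestronglyMeasurable
  have hFm : AEStronglyMeasurable F ((volume.restrict (Ioc (0:ℝ) y)).prod (volume.restrict (Ioi (0:ℝ)))) := by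
    refine AEStronglyMeasurable.indicator ?_ (measurableSet_lt measurable_fst measurable_snd)
    exact ((Continuous.aestronglyMeasurable (by continuity)).mul hPm.comp_snd)
  have hFint : Integrable F ((volume.restrict (Ioc (0:ℝ) y)).prod (volume.restrict (Ioi (0:ℝ)))) := by
    have hg : Integrable (fun p : ℝ × ℝ => (M * Real.exp (M*y)) * ‖Pib p.2‖)
        ((volume.restrict (Ioc (0:ℝ) y)).prod (volume.restrict (Ioi (0:ℝ)))) := by
      have := (integrable_const (c := (1:ℝ)) (μ := volume.restrict (Ioc (0:ℝ) y))).mul_prod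
        (hPib_int.norm.const_mul (M * Real.exp (M*y)))
      simpa using this
    refine hg.mono' hFm ?_
    rw [Measure.prod_restrict]
    filter_upwards [ae_restrict_mem (measurableSet_Ioc.prod measurableSet_Ioi)] with p hp
    by_cases hps : p ∈ {q : ℝ × ℝ | q.1 < q.2}
    · rw [hF, Set.indicator_of_mem hps, norm_mul]
      have h1 : ‖M * Real.exp (M * p.1)‖ ≤ M * Real.exp (M * y) := by
        rw [Real.norm_eq_abs, abs_of_nonneg (by positivity)]
        have h2 : Real.exp (M*p.1) ≤ Real.exp (M*y) :=
          Real.exp_le_exp.mpr (mul_le_mul_of_nonneg_left hp.1.2 hM.le)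
        nlinarith [Real.exp_pos (M*p.1)]
      exact mul_le_mul_of_nonneg_right h1 (norm_nonneg _)
    · rw [hF, Set.indicator_of_notMem hps]
      simp only [norm_zero]
      positivity
  have hswap := integral_integral_swap (f := fun r s => F (r, s)) hFint
  have hL : ∀ r ∈ Ioc (0:ℝ) y, (∫ s in Ioi (0:ℝ), F (r, s)) = M * (Real.exp (M*r) * PiBar2 Pib r) := by
    intro r hr
    have h1 : (fun s => F (r, s)) = (Ioi r).indicator (fun s => M * Real.exp (M*r) * Pib s) := by
      funext s
      simp only [hF, Set.indicator_apply, Set.mem_setOf_eq, Set.mem_Ioi]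
    rw [h1, integral_indicator measurableSet_Ioi,
      Measure.restrict_restrict measurableSet_Ioi,
      Set.inter_eq_self_of_subset_left (Ioi_subset_Ioi hr.1.le),
      integral_const_mul]
    unfold PiBar2
    ring
  have hR : ∀ s ∈ Ioi (0:ℝ), (∫ r in Ioc (0:ℝ) y, F (r, s)) = (Real.exp (M * min s y) - 1) * Pib s := by
    intro s hs
    have h1 : (fun r => F (r, s)) = (Iio s).indicator (fun r => M * Real.exp (M*r) * Pib s) := by
      funext r
      simp only [hF, Set.indicator_apply, Set.mem_setOf_eq, Set.mem_Iio]
    rw [h1, integral_indicator measurableSet_Iio,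
      Measure.restrict_restrict measurableSet_Iio]
    have h2 : ∫ r in Iio s ∩ Ioc (0:ℝ) y, M * Real.exp (M * r) * Pib s
        = (∫ r in Iio s ∩ Ioc (0:ℝ) y, M * Real.exp (M * r)) * Pib s := integral_mul_const _ _
    rw [h2]
    congr 1
    rcases le_or_gt s y with hsy | hsy
    · have h3 : Iio s ∩ Ioc (0:ℝ) y = Ioo 0 s := by
        ext r
        simp only [Set.mem_inter_iff, Set.mem_Iio, Set.mem_Ioc, Set.mem_Ioo]
        constructor
        · rintro ⟨a, b, _⟩; exact ⟨b, a⟩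
        · rintro ⟨a, b⟩; exact ⟨b, a, b.le.trans hsy⟩
      rw [h3, min_eq_left hsy, ← integral_Ioc_eq_integral_Ioo]
      simpa using aux_exp_prim (M := M) (le_of_lt hs)
    · have h3 : Iio s ∩ Ioc (0:ℝ) y = Ioc 0 y :=
        Set.inter_eq_self_of_subset_right (fun r hr => lt_of_le_of_lt hr.2 hsy)
      rw [h3, min_eq_right hsy.le]
      simpa using aux_exp_prim (M := M) hy.le
  have hi1 : IntegrableOn (fun s => (Real.exp (M * min s y) - 1) * Pib s) (Ioc (0:ℝ) y) := by
    refine Integrable.mono' ((hPib_int.mono_set Ioc_subset_Ioi_self).norm.const_mul (Real.exp (M*y))) ?_ ?_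
    · exact (Continuous.aestronglyMeasurable (by continuity)).mul
        (hPib_int.mono_set Ioc_subset_Ioi_self).aestronglyMeasurable
    · filter_upwards [ae_restrict_mem measurableSet_Ioc] with s hs
      rw [norm_mul]
      have hmin : 0 ≤ min s y := le_min hs.1.le hy.le
      have h4 : ‖Real.exp (M * min s y) - 1‖ ≤ Real.exp (M*y) := by
        rw [Real.norm_eq_abs, abs_of_nonneg (by nlinarith [Real.one_le_exp (by positivity : (0:ℝ) ≤ M * min s y)])]
        have : Real.exp (M * min s y) ≤ Real.exp (M*y) :=
          Real.exp_le_exp.mpr (mul_le_mul_of_nonneg_left (min_le_right s y) hM.le)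
        nlinarith
      exact mul_le_mul_of_nonneg_right h4 (norm_nonneg _)
  have hi2 : IntegrableOn (fun s => (Real.exp (M * min s y) - 1) * Pib s) (Ioi y) := by
    refine IntegrableOn.congr_fun
      ((hPib_int.mono_set (Ioi_subset_Ioi hy.le)).const_mul (Real.exp (M*y) - 1))
      (fun s hs => by simp [min_eq_right (le_of_lt (Set.mem_Ioi.mp hs))]) measurableSet_Ioi
  calc M * ∫ r in Ioc (0:ℝ) y, Real.exp (M*r) * PiBar2 Pib r
      = ∫ r in Ioc (0:ℝ) y, (∫ s in Ioi (0:ℝ), F (r, s)) := by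
        rw [← integral_const_mul]
        exact (setIntegral_congr_fun measurableSet_Ioc hL).symm
    _ = ∫ s in Ioi (0:ℝ), (∫ r in Ioc (0:ℝ) y, F (r, s)) := hswap
    _ = ∫ s in Ioi (0:ℝ), (Real.exp (M * min s y) - 1) * Pib s :=
        setIntegral_congr_fun measurableSet_Ioi hR
    _ = (∫ s in Ioc (0:ℝ) y, (Real.exp (M * min s y) - 1) * Pib s)
        + ∫ s in Ioi y, (Real.exp (M * min s y) - 1) * Pib s := by
        rw [← Ioc_union_Ioi_eq_Ioi hy.le,
          setIntegral_union (Ioc_disjoint_Ioi le_rfl) measurableSet_Ioi hi1 hi2]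
    _ = (∫ s in Ioc (0:ℝ) y, (Real.exp (M*s) - 1) * Pib s) + (Real.exp (M*y) - 1) * PiBar2 Pib y := by
        congr 1
        · exact setIntegral_congr_fun measurableSet_Ioc (fun s hs => by simp [min_eq_left hs.2])
        · rw [setIntegral_congr_fun measurableSet_Ioi
            (f := fun s => (Real.exp (M * min s y) - 1) * Pib s)
            (g := fun s => (Real.exp (M*y) - 1) * Pib s)
            (fun s hs => by simp [min_eq_right (le_of_lt (Set.mem_Ioi.mp hs))]), integral_const_mul]
          rfl

lemma gfun_eq (hPib_int : IntegrableOn Pib (Ioi 0)) {m σ2 M y : ℝ} (hM : 0 < M) (hy : 0 < y) :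
    gfun Pib m σ2 M y
      = Real.exp (-(M*y)) * ((M * σ2 - m - PiBar2 Pib 0) + ∫ s in Ioc (0:ℝ) y, Real.exp (M*s) * Pib s) := by
  have hIntD : IntegrableOn (fun s => Real.exp (M*s) * Pib s) (Ioc (0:ℝ) y) := by
    refine Integrable.mono' ((hPib_int.mono_set Ioc_subset_Ioi_self).norm.const_mul (Real.exp (M*y)))
      ((Continuous.aestronglyMeasurable (by continuity)).mul
        (hPib_int.mono_set Ioc_subset_Ioi_self).aestronglyMeasurable) ?_
    filter_upwards [ae_restrict_mem measurableSet_Ioc] with s hs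
    rw [norm_mul, Real.norm_eq_abs, abs_of_nonneg (Real.exp_pos _).le]
    have h1 : Real.exp (M*s) ≤ Real.exp (M*y) :=
      Real.exp_le_exp.mpr (mul_le_mul_of_nonneg_left hs.2 hM.le)
    nlinarith [norm_nonneg (Pib s), Real.exp_pos (M*s)]
  have hD : ∫ s in Ioc (0:ℝ) y, (Real.exp (M*s) - 1) * Pib s
      = (∫ s in Ioc (0:ℝ) y, Real.exp (M*s) * Pib s) - ∫ s in Ioc (0:ℝ) y, Pib s := by
    rw [← integral_sub hIntD (hPib_int.mono_set Ioc_subset_Ioi_self)]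
    exact setIntegral_congr_fun measurableSet_Ioc (fun s _ => by ring)
  have hsplit := PiBar2_split hPib_int (le_refl (0:ℝ)) hy.le
  unfold gfun
  rw [core_identity hPib_int hM hy, hD, hsplit]
  ring

lemma main_fubini (hPib_int : IntegrableOn Pib (Ioi 0))
    {M u : ℝ} (hM : 0 < M) (hu : 0 < u) :
    Integrable (fun y => ((1 - Real.exp (-(u*y))) * Real.exp (-(M*y)))
        * ∫ s in Ioc (0:ℝ) y, Real.exp (M*s) * Pib s) (volume.restrict (Ioi (0:ℝ)))
    ∧ (∫ y in Ioi (0:ℝ), ((1 - Real.exp (-(u*y))) * Real.exp (-(M*y)))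
        * ∫ s in Ioc (0:ℝ) y, Real.exp (M*s) * Pib s)
      = (1/M) * PiBar2 Pib 0 - (1/(u+M)) * ∫ s in Ioi (0:ℝ), Real.exp (-(u*s)) * Pib s := by
  have huM : 0 < u + M := by linarith
  set F2 : ℝ × ℝ → ℝ :=
    {q : ℝ × ℝ | q.2 ≤ q.1}.indicator
      (fun q => ((1 - Real.exp (-(u*q.1))) * Real.exp (-(M*q.1))) * (Real.exp (M*q.2) * Pib q.2))
    with hF2
  have hPm : AEStronglyMeasurable Pib (volume.restrict (Ioi (0:ℝ))) := hPib_int.aestronglyMeasurable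
  have hF2m : AEStronglyMeasurable F2
      ((volume.restrict (Ioi (0:ℝ))).prod (volume.restrict (Ioi (0:ℝ)))) := by
    refine AEStronglyMeasurable.indicator ?_ (measurableSet_le measurable_snd measurable_fst)
    exact (Continuous.aestronglyMeasurable (by continuity)).mul
      ((Continuous.aestronglyMeasurable (by continuity : Continuous fun q : ℝ × ℝ => Real.exp (M*q.2))).mul hPm.comp_snd)
  have hslice : ∀ s : ℝ, (fun y => F2 (y, s))
      = (Ici s).indicator (fun y => ((1 - Real.exp (-(u*y))) * Real.exp (-(M*y))) * (Real.exp (M*s) * Pib s)) := by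
    intro s; funext yy
    simp only [hF2, Set.indicator_apply, Set.mem_setOf_eq, Set.mem_Ici]
  have hcond1 : ∀ s : ℝ, 0 < s → Integrable (fun y => F2 (y, s)) (volume.restrict (Ioi (0:ℝ))) := by
    intro s hs
    rw [hslice s]
    refine Integrable.mono' ((aux_intOn_exp_neg_mul hM 0).const_mul (Real.exp (M*s) * ‖Pib s‖))
      (((Continuous.aestronglyMeasurable (by continuity)).indicator measurableSet_Ici)) ?_
    filter_upwards [ae_restrict_mem measurableSet_Ioi] with yy hyy
    by_cases hmem : yy ∈ Ici s
    · rw [Set.indicator_of_mem hmem, norm_mul, norm_mul, norm_mul]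
      have h1 : ‖1 - Real.exp (-(u*yy))‖ ≤ 1 := by
        rw [Real.norm_eq_abs, abs_le]
        have := Real.exp_pos (-(u*yy))
        have h2 : Real.exp (-(u*yy)) ≤ 1 := Real.exp_le_one_iff.mpr (by nlinarith [Set.mem_Ioi.mp hyy])
        constructor <;> nlinarith
      have h3 : ‖Real.exp (-(M*yy))‖ = Real.exp (-(M*yy)) := by
        rw [Real.norm_eq_abs, abs_of_nonneg (Real.exp_pos _).le]
      have h4 : ‖Real.exp (M*s)‖ = Real.exp (M*s) := by
        rw [Real.norm_eq_abs, abs_of_nonneg (Real.exp_pos _).le]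
      rw [h3, h4]
      have := Real.exp_pos (-(M*yy))
      have := Real.exp_pos (M*s)
      have h5 : ‖1 - Real.exp (-(u*yy))‖ * Real.exp (-(M*yy)) ≤ Real.exp (-(M*yy)) := by nlinarith
      nlinarith [mul_le_mul_of_nonneg_right h5 (mul_nonneg (Real.exp_pos (M*s)).le (norm_nonneg (Pib s)))]
    · rw [Set.indicator_of_notMem hmem]
      simp only [norm_zero]
      positivity
  have hcond2 : Integrable (fun s => ∫ y, ‖F2 (y, s)‖ ∂(volume.restrict (Ioi (0:ℝ))))
      (volume.restrict (Ioi (0:ℝ))) := by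
    refine Integrable.mono' (hPib_int.norm.const_mul (1/M))
      ((hF2m.norm.prod_swap).integral_prod_right') ?_
    filter_upwards [ae_restrict_mem measurableSet_Ioi] with s hs
    have hs' : (0:ℝ) < s := hs
    have hnn : 0 ≤ ∫ y, ‖F2 (y, s)‖ ∂(volume.restrict (Ioi (0:ℝ))) :=
      integral_nonneg fun y => norm_nonneg _
    rw [Real.norm_eq_abs, abs_of_nonneg hnn]
    have hgint : Integrable ((Ici s).indicator (fun y => (Real.exp (M*s) * ‖Pib s‖) * Real.exp (-(M*y))))
        (volume.restrict (Ioi (0:ℝ))) := by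
      rw [integrable_indicator_iff measurableSet_Ici]
      exact (((aux_intOn_exp_neg_mul hM 0).const_mul (Real.exp (M*s) * ‖Pib s‖))).integrableOn
    have hle : ∫ y, ‖F2 (y, s)‖ ∂(volume.restrict (Ioi (0:ℝ)))
        ≤ ∫ y, (Ici s).indicator (fun y => (Real.exp (M*s) * ‖Pib s‖) * Real.exp (-(M*y))) y
            ∂(volume.restrict (Ioi (0:ℝ))) := by
      refine integral_mono_ae ((hcond1 s hs').norm) hgint ?_
      filter_upwards [ae_restrict_mem measurableSet_Ioi] with yy hyy
      rw [congrFun (hslice s) yy]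
      by_cases hmem : yy ∈ Ici s
      · rw [Set.indicator_of_mem hmem, Set.indicator_of_mem hmem, norm_mul, norm_mul, norm_mul]
        have h1 : ‖1 - Real.exp (-(u*yy))‖ ≤ 1 := by
          rw [Real.norm_eq_abs, abs_le]
          have := Real.exp_pos (-(u*yy))
          have h2 : Real.exp (-(u*yy)) ≤ 1 := Real.exp_le_one_iff.mpr (by nlinarith [Set.mem_Ioi.mp hyy])
          constructor <;> nlinarith
        have h3 : ‖Real.exp (-(M*yy))‖ = Real.exp (-(M*yy)) := by
          rw [Real.norm_eq_abs, abs_of_nonneg (Real.exp_pos _).le]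
        have h4 : ‖Real.exp (M*s)‖ = Real.exp (M*s) := by
          rw [Real.norm_eq_abs, abs_of_nonneg (Real.exp_pos _).le]
        rw [h3, h4]
        have e1 := Real.exp_pos (-(M*yy))
        have e2 := Real.exp_pos (M*s)
        have hnn2 := norm_nonneg (Pib s)
        have h5 : ‖1 - Real.exp (-(u*yy))‖ * Real.exp (-(M*yy)) ≤ Real.exp (-(M*yy)) := by nlinarith
        nlinarith [mul_le_mul_of_nonneg_right h5 (mul_nonneg e2.le hnn2)]
      · rw [Set.indicator_of_notMem hmem, Set.indicator_of_notMem hmem, norm_zero]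
    have hval : ∫ y, (Ici s).indicator (fun y => (Real.exp (M*s) * ‖Pib s‖) * Real.exp (-(M*y))) y
        ∂(volume.restrict (Ioi (0:ℝ))) = 1/M * ‖Pib s‖ := by
      have hIci : Ici s ∩ Ioi (0:ℝ) = Ici s :=
        Set.inter_eq_self_of_subset_left (fun x hx => lt_of_lt_of_le hs' hx)
      rw [integral_indicator measurableSet_Ici, Measure.restrict_restrict measurableSet_Ici,
        hIci, integral_Ici_eq_integral_Ioi, integral_const_mul, aux_integral_exp_neg_mul_Ioi hM s]
      have e1 : Real.exp (M*s) * Real.exp (-(M*s)) = 1 := by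
        rw [← Real.exp_add]; simp
      linear_combination (‖Pib s‖ / M) * e1
    linarith [hle, hval.le, hval.ge]
  have hF2int : Integrable F2 ((volume.restrict (Ioi (0:ℝ))).prod (volume.restrict (Ioi (0:ℝ)))) := by
    refine (integrable_prod_iff' hF2m).mpr ⟨?_, hcond2⟩
    filter_upwards [ae_restrict_mem measurableSet_Ioi] with s hs
    exact hcond1 s hs
  have hinner : ∀ y ∈ Ioi (0:ℝ), (∫ s in Ioi (0:ℝ), F2 (y, s))
      = ((1 - Real.exp (-(u*y))) * Real.exp (-(M*y))) * ∫ s in Ioc (0:ℝ) y, Real.exp (M*s) * Pib s := by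
    intro y _
    have h1 : (fun s => F2 (y, s))
        = (Iic y).indicator (fun s => ((1 - Real.exp (-(u*y))) * Real.exp (-(M*y))) * (Real.exp (M*s) * Pib s)) := by
      funext s
      simp only [hF2, Set.indicator_apply, Set.mem_setOf_eq, Set.mem_Iic]
    rw [h1, integral_indicator measurableSet_Iic, Measure.restrict_restrict measurableSet_Iic,
      Set.inter_comm, Set.Ioi_inter_Iic, integral_const_mul]
  have hIntConc : Integrable (fun y => ((1 - Real.exp (-(u*y))) * Real.exp (-(M*y)))
      * ∫ s in Set.Ioc (0:ℝ) y, Real.exp (M*s) * Pib s) (volume.restrict (Ioi (0:ℝ))) := by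
    refine (hF2int.integral_prod_left).congr ?_
    filter_upwards [ae_restrict_mem measurableSet_Ioi] with y hy
    exact hinner y hy
  refine ⟨hIntConc, ?_⟩
  have hswap := integral_integral_swap (f := fun a b => F2 (a, b)) hF2int
  have hinner2 : ∀ s ∈ Ioi (0:ℝ), (∫ y in Ioi (0:ℝ), F2 (y, s))
      = (1/M) * Pib s - (1/(u+M)) * (Real.exp (-(u*s)) * Pib s) := by
    intro s hs
    have hs' : (0:ℝ) < s := hs
    have hIci : Ici s ∩ Ioi (0:ℝ) = Ici s :=
      Set.inter_eq_self_of_subset_left (fun x hx => lt_of_lt_of_le hs' hx)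
    rw [hslice s, integral_indicator measurableSet_Ici, Measure.restrict_restrict measurableSet_Ici,
      hIci, integral_Ici_eq_integral_Ioi, integral_mul_const]
    have h7 : ∫ y in Ioi s, (1 - Real.exp (-(u*y))) * Real.exp (-(M*y))
        = Real.exp (-(M*s))/M - Real.exp (-((u+M)*s))/(u+M) := by
      have hptw : ∀ y : ℝ, (1 - Real.exp (-(u*y))) * Real.exp (-(M*y))
          = Real.exp (-(M*y)) - Real.exp (-((u+M)*y)) := by
        intro y
        have h5 : Real.exp (-(u*y)) * Real.exp (-(M*y)) = Real.exp (-((u+M)*y)) := by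
          rw [← Real.exp_add]; ring_nf
        rw [sub_mul, one_mul, h5]
      rw [setIntegral_congr_fun measurableSet_Ioi (fun y _ => hptw y),
        integral_sub (aux_intOn_exp_neg_mul hM s) (aux_intOn_exp_neg_mul huM s),
        aux_integral_exp_neg_mul_Ioi hM s, aux_integral_exp_neg_mul_Ioi huM s]
    rw [h7]
    have e1 : Real.exp (-(M*s)) * Real.exp (M*s) = 1 := by rw [← Real.exp_add]; simp
    have e2 : Real.exp (-((u+M)*s)) * Real.exp (M*s) = Real.exp (-(u*s)) := by
      rw [← Real.exp_add]; congr 1; ring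
    have h6 : (Real.exp (-(M*s))/M - Real.exp (-((u+M)*s))/(u+M)) * (Real.exp (M*s) * Pib s)
        = (Real.exp (-(M*s)) * Real.exp (M*s)) * Pib s/M
          - (Real.exp (-((u+M)*s)) * Real.exp (M*s)) * Pib s/(u+M) := by ring
    rw [h6, e1, e2]; ring
  calc (∫ y in Ioi (0:ℝ), ((1 - Real.exp (-(u*y))) * Real.exp (-(M*y)))
        * ∫ s in Ioc (0:ℝ) y, Real.exp (M*s) * Pib s)
      = ∫ y in Ioi (0:ℝ), (∫ s in Ioi (0:ℝ), F2 (y, s)) :=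
        (setIntegral_congr_fun measurableSet_Ioi hinner).symm
    _ = ∫ s in Ioi (0:ℝ), (∫ y in Ioi (0:ℝ), F2 (y, s)) := hswap
    _ = ∫ s in Ioi (0:ℝ), ((1/M) * Pib s - (1/(u+M)) * (Real.exp (-(u*s)) * Pib s)) :=
        setIntegral_congr_fun measurableSet_Ioi hinner2
    _ = (1/M) * PiBar2 Pib 0 - (1/(u+M)) * ∫ s in Ioi (0:ℝ), Real.exp (-(u*s)) * Pib s := by
        rw [integral_sub (hPib_int.const_mul _) ((aux_Jint hPib_int hu).const_mul _),
          integral_const_mul, integral_const_mul]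
        rfl

end Aux

set_option maxHeartbeats 2000000 in
/-- for a `B_N` Bernstein function with `σ² > 0` and finite `Π̄̄(0⁺)`,
(i) `φ(u)/(u+𝔪)` is a Bernstein function for `𝔪 > (m + Π̄̄(0⁺))/σ²`, with explicit
nonnegative Lévy density `g_𝔪`; (ii) any zero `−u₀` of the analytic extension of φ
satisfies `u₀ ≤ m/σ²`, with equality iff `Π̄̄(0⁺) = 0`. -/
theorem bernstein_ratio_small_perturbation
    (φ Pib : ℝ → ℝ) (m σ2 : ℝ)
    (hm : 0 ≤ m) (hσ : 0 < σ2)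
    (hPib_nonneg : ∀ y : ℝ, 0 < y → 0 ≤ Pib y)
    (hPib_anti : ∀ x y : ℝ, 0 < x → x ≤ y → Pib y ≤ Pib x)
    (hPib_int : IntegrableOn Pib (Set.Ioi 0))
    (hrep : ∀ u : ℝ, 0 < u →
      φ u = m + σ2 * u + ∫ y in Set.Ioi (0:ℝ), (1 - Real.exp (-(u * y))) * Pib y) :
    (∀ M : ℝ, (m + ∫ y in Set.Ioi (0:ℝ), Pib y) / σ2 < M →
      (∀ y : ℝ, 0 < y → 0 ≤ gfun Pib m σ2 M y)
      ∧ ∀ u : ℝ, 0 < u →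
          φ u / (u + M)
            = m / M + ∫ y in Set.Ioi (0:ℝ), (1 - Real.exp (-(u * y))) * gfun Pib m σ2 M y)
    ∧ (∀ u₀ : ℝ, 0 < u₀ →
        IntegrableOn (fun y : ℝ => Real.exp (u₀ * y) * PiBar2 Pib y) (Set.Ioi 0) →
        m = σ2 * u₀ + u₀ * ∫ y in Set.Ioi (0:ℝ), Real.exp (u₀ * y) * PiBar2 Pib y →
        u₀ ≤ m / σ2 ∧ (u₀ = m / σ2 ↔ (∫ y in Set.Ioi (0:ℝ), Pib y) = 0)) := by
  have hC : 0 ≤ PiBar2 Pib 0 := PiBar2_nonneg hPib_nonneg le_rfl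
  have hCeq : (∫ y in Set.Ioi (0:ℝ), Pib y) = PiBar2 Pib 0 := rfl
  constructor
  · intro M hM'
    rw [hCeq] at hM'
    have hM : 0 < M := lt_of_le_of_lt (div_nonneg (by linarith) hσ.le) hM'
    have ha : 0 < M * σ2 - m - PiBar2 Pib 0 := by
      have h1 := (div_lt_iff₀ hσ).mp hM'
      nlinarith
    constructor
    · intro y hy
      rw [gfun_eq hPib_int hM hy]
      have hD0 : 0 ≤ ∫ s in Set.Ioc (0:ℝ) y, Real.exp (M*s) * Pib s :=
        setIntegral_nonneg measurableSet_Ioc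
          (fun s hs => mul_nonneg (Real.exp_pos _).le (hPib_nonneg s hs.1))
      have hE := Real.exp_pos (-(M*y))
      nlinarith
    · intro u hu
      have huM : 0 < u + M := by linarith
      obtain ⟨hInt2, hVal2⟩ := main_fubini hPib_int hM hu
      have hJ : IntegrableOn (fun s => Real.exp (-(u*s)) * Pib s) (Set.Ioi 0) :=
        aux_Jint hPib_int hu
      have hphi : φ u = m + σ2 * u
          + (PiBar2 Pib 0 - ∫ s in Set.Ioi (0:ℝ), Real.exp (-(u*s)) * Pib s) := by
        rw [hrep u hu]
        congr 1
        have hptw : ∀ y : ℝ, (1 - Real.exp (-(u*y))) * Pib y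
            = Pib y - Real.exp (-(u*y)) * Pib y := fun y => by ring
        rw [setIntegral_congr_fun measurableSet_Ioi (fun y _ => hptw y),
          integral_sub hPib_int hJ]
        rfl
      have hA : Integrable (fun y => (M*σ2 - m - PiBar2 Pib 0)
          * ((1 - Real.exp (-(u*y))) * Real.exp (-(M*y)))) (volume.restrict (Set.Ioi (0:ℝ))) := by
        refine Integrable.const_mul ?_ _
        refine Integrable.mono' (aux_intOn_exp_neg_mul hM 0)
          (Continuous.aestronglyMeasurable (by continuity)) ?_
        filter_upwards [ae_restrict_mem measurableSet_Ioi] with y hy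
        rw [norm_mul]
        have h1 : ‖1 - Real.exp (-(u*y))‖ ≤ 1 := by
          rw [Real.norm_eq_abs, abs_le]
          have := Real.exp_pos (-(u*y))
          have h2 : Real.exp (-(u*y)) ≤ 1 := Real.exp_le_one_iff.mpr (by nlinarith [Set.mem_Ioi.mp hy])
          constructor <;> nlinarith
        have h3 : ‖Real.exp (-(M*y))‖ = Real.exp (-(M*y)) := by
          rw [Real.norm_eq_abs, abs_of_nonneg (Real.exp_pos _).le]
        rw [h3]
        nlinarith [Real.exp_pos (-(M*y))]
      have hsplitInt : ∫ y in Set.Ioi (0:ℝ), (1 - Real.exp (-(u * y))) * gfun Pib m σ2 M y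
          = (M*σ2 - m - PiBar2 Pib 0) * (1/M - 1/(u+M))
            + ((1/M) * PiBar2 Pib 0
              - (1/(u+M)) * ∫ s in Set.Ioi (0:ℝ), Real.exp (-(u*s)) * Pib s) := by
        have hcongr : ∀ y ∈ Set.Ioi (0:ℝ), (1 - Real.exp (-(u * y))) * gfun Pib m σ2 M y
            = (M*σ2 - m - PiBar2 Pib 0) * ((1 - Real.exp (-(u*y))) * Real.exp (-(M*y)))
              + ((1 - Real.exp (-(u*y))) * Real.exp (-(M*y)))
                * ∫ s in Set.Ioc (0:ℝ) y, Real.exp (M*s) * Pib s := by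
          intro y hy
          rw [gfun_eq hPib_int hM hy]; ring
        have hfirst : ∫ y in Set.Ioi (0:ℝ), (M*σ2 - m - PiBar2 Pib 0)
            * ((1 - Real.exp (-(u*y))) * Real.exp (-(M*y)))
            = (M*σ2 - m - PiBar2 Pib 0) * (1/M - 1/(u+M)) := by
          rw [integral_const_mul]
          congr 1
          have hptw : ∀ y : ℝ, (1 - Real.exp (-(u*y))) * Real.exp (-(M*y))
              = Real.exp (-(M*y)) - Real.exp (-((u+M)*y)) := by
            intro y
            have h5 : Real.exp (-(u*y)) * Real.exp (-(M*y)) = Real.exp (-((u+M)*y)) := by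
              rw [← Real.exp_add]; ring_nf
            rw [sub_mul, one_mul, h5]
          rw [setIntegral_congr_fun measurableSet_Ioi (fun y _ => hptw y),
            integral_sub (aux_intOn_exp_neg_mul hM 0) (aux_intOn_exp_neg_mul huM 0),
            aux_integral_exp_neg_mul_Ioi hM 0, aux_integral_exp_neg_mul_Ioi huM 0]
          norm_num
        rw [setIntegral_congr_fun measurableSet_Ioi hcongr, integral_add hA hInt2, hfirst, hVal2]
      rw [hphi, hsplitInt]
      have hM0 : M ≠ 0 := hM.ne'
      have huM0 : u + M ≠ 0 := huM.ne'
      field_simp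
      ring
  · intro u₀ hu₀ hIint heq
    have hInonneg : 0 ≤ ∫ y in Set.Ioi (0:ℝ), Real.exp (u₀*y) * PiBar2 Pib y :=
      setIntegral_nonneg measurableSet_Ioi (fun y hy =>
        mul_nonneg (Real.exp_pos _).le (PiBar2_nonneg hPib_nonneg (le_of_lt hy)))
    have hle : u₀ ≤ m / σ2 := by
      rw [le_div_iff₀ hσ]
      nlinarith
    refine ⟨hle, ?_, ?_⟩
    · intro hEq
      have hmσ : m = σ2 * u₀ := by
        rw [hEq]; field_simp
      have hI0 : (∫ y in Set.Ioi (0:ℝ), Real.exp (u₀*y) * PiBar2 Pib y) = 0 := by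
        have h0 : u₀ * (∫ y in Set.Ioi (0:ℝ), Real.exp (u₀*y) * PiBar2 Pib y) = 0 := by
          linarith
        exact (mul_eq_zero.mp h0).resolve_left hu₀.ne'
      have hae : (fun y => Real.exp (u₀*y) * PiBar2 Pib y)
          =ᵐ[volume.restrict (Set.Ioi 0)] 0 := by
        refine (integral_eq_zero_iff_of_nonneg_ae ?_ hIint).mp hI0
        filter_upwards [ae_restrict_mem measurableSet_Ioi] with y hy
        exact mul_nonneg (Real.exp_pos _).le (PiBar2_nonneg hPib_nonneg (le_of_lt hy))
      have hP0 : ∀ y : ℝ, 0 < y → PiBar2 Pib y = 0 := by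
        intro y hy
        have hres : (volume.restrict (Set.Ioo (0:ℝ) y)) ≠ 0 := by
          rw [Ne, Measure.restrict_eq_zero]
          simp only [Real.volume_Ioo, ENNReal.ofReal_eq_zero, not_le]
          linarith
        haveI : (ae (volume.restrict (Set.Ioo (0:ℝ) y))).NeBot := ae_neBot.mpr hres
        have hae2 : ∀ᵐ y' ∂(volume.restrict (Set.Ioo (0:ℝ) y)),
            Real.exp (u₀*y') * PiBar2 Pib y' = 0 ∧ y' ∈ Set.Ioo (0:ℝ) y := by
          have h1 := ae_restrict_of_ae_restrict_of_subset
            ((Set.Ioo_subset_Ioi_self) : Set.Ioo (0:ℝ) y ⊆ Set.Ioi 0) hae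
          filter_upwards [h1, ae_restrict_mem measurableSet_Ioo] with y' h1' h2'
          exact ⟨h1', h2'⟩
        obtain ⟨y', hy'0, hy'mem⟩ := hae2.exists
        have hP2y' : PiBar2 Pib y' = 0 :=
          (mul_eq_zero.mp hy'0).resolve_left (Real.exp_ne_zero _)
        have hsplit := PiBar2_split hPib_int (le_of_lt hy'mem.1) (le_of_lt hy'mem.2)
        have hGnn : 0 ≤ ∫ s in Set.Ioc y' y, Pib s :=
          setIntegral_nonneg measurableSet_Ioc (fun s hs => hPib_nonneg s (lt_trans hy'mem.1 hs.1))
        have hPy := PiBar2_nonneg hPib_nonneg (le_of_lt hy) (Pib := Pib)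
        linarith [hsplit]
      have hPz : ∀ z : ℝ, 0 < z → Pib z = 0 := by
        intro z hz
        have h1 := PiBar2_split hPib_int (by positivity : (0:ℝ) ≤ z/2) (by linarith : z/2 ≤ z)
        rw [hP0 _ (by positivity), hP0 _ hz, add_zero] at h1
        have h2 : Pib z * (volume (Set.Ioc (z/2) z)).toReal ≤ ∫ s in Set.Ioc (z/2) z, Pib s := by
          refine setIntegral_ge_of_const_le_real measurableSet_Ioc ?_ ?_ ?_
          · rw [Real.volume_Ioc]; exact ENNReal.ofReal_ne_top
          · intro x hx
            exact hPib_anti x z (by linarith [hx.1] : (0:ℝ) < x) hx.2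
          · exact hPib_int.mono_set (fun s hs => by
              have := hs.1; simp only [Set.mem_Ioi]; linarith)
        rw [← h1] at h2
        have hvol : (volume (Set.Ioc (z/2) z)).toReal = z/2 := by
          rw [Real.volume_Ioc, ENNReal.toReal_ofReal (by linarith)]; ring
        have hnn := hPib_nonneg z hz
        nlinarith
      exact setIntegral_eq_zero_of_forall_eq_zero (fun x hx => hPz x hx)
    · intro hC0
      have haePib : Pib =ᵐ[volume.restrict (Set.Ioi 0)] 0 := by
        refine (integral_eq_zero_iff_of_nonneg_ae ?_ hPib_int).mp hC0
        filter_upwards [ae_restrict_mem measurableSet_Ioi] with y hy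
        exact hPib_nonneg y hy
      have hP2 : ∀ y : ℝ, 0 < y → PiBar2 Pib y = 0 := by
        intro y hy
        unfold PiBar2
        have h1 : Pib =ᵐ[volume.restrict (Set.Ioi y)] 0 :=
          ae_restrict_of_ae_restrict_of_subset (Set.Ioi_subset_Ioi hy.le) haePib
        rw [integral_congr_ae h1]
        simp
      have hI0 : (∫ y in Set.Ioi (0:ℝ), Real.exp (u₀*y) * PiBar2 Pib y) = 0 := by
        rw [setIntegral_congr_fun measurableSet_Ioi
          (g := fun _ : ℝ => (0:ℝ)) (fun y hy => by rw [hP2 y hy, mul_zero])]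
        exact integral_zero _ _
      rw [eq_div_iff hσ.ne']
      nlinarith
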